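/- Let ε ∈ (1,2]. There exists a constant c > 0, depending only on ε, such that for all nonnegative reals a, κ, C, Q and every real number R: if R ≤ a·Q^{1/ε} + κ and R ≥ Q/2 − C, then R ≤ c·( a^{ε/(ε−1)} + a·C^{1/ε} + κ ). -/

import Mathlib

private lemma rpow_subadd (x y p : ℝ) (hx : 0 ≤ x) (hy : 0 ≤ y) (hp : 0 ≤ p) (hp1 : p ≤ 1) :
    (x + y) ^ p ≤ x ^ p + y ^ p := by
  have h := NNReal.rpow_add_le_add_rpow (x.toNNReal) (y.toNNReal) hp hp1
  have := NNReal.coe_le_coe.mpr h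
  push_cast at this
  rwa [Real.coe_toNNReal x hx, Real.coe_toNNReal y hy] at this

private lemma young_aux (ε a κ : ℝ) (hε1 : 1 < ε) (hε2 : ε ≤ 2) (ha : 0 ≤ a) (hκ : 0 ≤ κ) :
    a * κ ^ (1 / ε) ≤ a ^ (ε / (ε - 1)) + κ := by
  have hε0 : 0 < ε := by linarith
  have hpq : (ε / (ε - 1)).HolderConjugate ε := by
    rw [Real.holderConjugate_iff]
    constructor
    · rw [lt_div_iff₀ (by linarith)]; linarith
    · field_simp; ring
  have h := Real.young_inequality_of_nonneg ha (Real.rpow_nonneg hκ (1 / ε)) hpq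
  have hk : (κ ^ (1 / ε)) ^ ε = κ := by
    rw [← Real.rpow_mul hκ, one_div, inv_mul_cancel₀ (ne_of_gt hε0), Real.rpow_one]
  rw [hk] at h
  have h1 : a ^ (ε / (ε - 1)) / (ε / (ε - 1)) ≤ a ^ (ε / (ε - 1)) :=
    div_le_self (Real.rpow_nonneg ha _) (by rw [le_div_iff₀ (by linarith)]; linarith)
  have h2 : κ / ε ≤ κ := div_le_self hκ (by linarith)
  linarith

/-- single-term self-bounding argument from the proof of Theorem 1.
For `ε ∈ (1,2]` there is a constant `c > 0` depending only on `ε` such that for all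
nonnegative `a, κ, C, Q` and real `R`: if `R ≤ a Q^{1/ε} + κ` and `R ≥ Q/2 − C`, then
`R ≤ c (a^{ε/(ε−1)} + a C^{1/ε} + κ)`. -/
theorem self_bounding_single
    (ε : ℝ) (hε1 : 1 < ε) (hε2 : ε ≤ 2) :
    ∃ c : ℝ, 0 < c ∧
      ∀ a κ C Q : ℝ, ∀ R : ℝ, 0 ≤ a → 0 ≤ κ → 0 ≤ C → 0 ≤ Q →
        R ≤ a * Q ^ (1 / ε) + κ → Q / 2 - C ≤ R →
        R ≤ c * (a ^ (ε / (ε - 1)) + a * C ^ (1 / ε) + κ) := by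
  have hε0 : 0 < ε := by linarith
  have hεm : 0 < ε - 1 := by linarith
  refine ⟨4 ^ (1 / (ε - 1)) + 9, by positivity, ?_⟩
  intro a κ C Q R ha hκ hC hQ h1 h2
  set c : ℝ := 4 ^ (1 / (ε - 1)) + 9 with hcdef
  have hc4 : (4 : ℝ) ≤ 4 ^ (1 / (ε - 1)) := by
    nth_rewrite 1 [show (4:ℝ) = 4 ^ (1:ℝ) by rw [Real.rpow_one]]
    apply Real.rpow_le_rpow_of_exponent_le (by norm_num)
    rw [le_div_iff₀ hεm]; linarith
  have hcnn : (0:ℝ) < c := by positivity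
  have hterms : 0 ≤ a ^ (ε / (ε - 1)) + a * C ^ (1 / ε) + κ := by positivity
  by_cases hcase : Q ≤ 4 * (a * Q ^ (1 / ε))
  · rcases eq_or_lt_of_le hQ with hQ0 | hQpos
    · -- Q = 0
      have hQe : Q ^ (1 / ε) = 0 := by
        rw [← hQ0, Real.zero_rpow (by positivity)]
      have : R ≤ κ := by rw [hQe] at h1; linarith
      nlinarith [Real.rpow_nonneg ha (ε / (ε - 1)), mul_nonneg ha (Real.rpow_nonneg hC (1/ε))]
    · -- Q > 0 : Q^{1-1/ε} ≤ 4a, hence Q^{1/ε} ≤ (4a)^{1/(ε-1)}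
      have hQp : 0 < Q ^ (1 / ε) := Real.rpow_pos_of_pos hQpos _
      have hsplit : Q = Q ^ (1 - 1 / ε) * Q ^ (1 / ε) := by
        rw [← Real.rpow_add hQpos]; ring_nf; rw [Real.rpow_one]
      have hQ1 : Q ^ (1 - 1 / ε) ≤ 4 * a := by
        have := hcase
        rw [hsplit] at this
        have h4 : Q ^ (1 - 1 / ε) * Q ^ (1 / ε) ≤ (4 * a) * Q ^ (1 / ε) := by linarith
        exact le_of_mul_le_mul_right h4 hQp
      have hQ2 : Q ^ (1 / ε) ≤ (4 * a) ^ (1 / (ε - 1)) := by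
        have h5 : (Q ^ (1 - 1 / ε)) ^ (1 / (ε - 1)) ≤ (4 * a) ^ (1 / (ε - 1)) :=
          Real.rpow_le_rpow (Real.rpow_nonneg hQ _) hQ1 (by positivity)
        rwa [← Real.rpow_mul hQ, show (1 - 1 / ε) * (1 / (ε - 1)) = 1 / ε by
          field_simp] at h5
      have hmul : a * (4 * a) ^ (1 / (ε - 1)) = 4 ^ (1 / (ε - 1)) * a ^ (ε / (ε - 1)) := by
        rw [Real.mul_rpow (by norm_num) ha, show ε / (ε - 1) = 1 + 1 / (ε - 1) by
          field_simp; ring, Real.rpow_add' ha (by positivity), Real.rpow_one]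
        ring
      have h6 : a * Q ^ (1 / ε) ≤ 4 ^ (1 / (ε - 1)) * a ^ (ε / (ε - 1)) := by
        rw [← hmul]; exact mul_le_mul_of_nonneg_left hQ2 ha
      have h7 : R ≤ 4 ^ (1 / (ε - 1)) * a ^ (ε / (ε - 1)) + κ := by linarith
      have hca : 0 ≤ a ^ (ε / (ε - 1)) := Real.rpow_nonneg ha _
      have hcC : 0 ≤ a * C ^ (1 / ε) := mul_nonneg ha (Real.rpow_nonneg hC _)
      nlinarith
  · -- Q ≤ 4κ + 4C
    push_neg at hcase
    have hQb : Q ≤ 4 * κ + 4 * C := by linarith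
    have hmono : Q ^ (1 / ε) ≤ (4 * κ + 4 * C) ^ (1 / ε) :=
      Real.rpow_le_rpow hQ hQb (by positivity)
    have hsub : (4 * κ + 4 * C) ^ (1 / ε) ≤ (4 * κ) ^ (1 / ε) + (4 * C) ^ (1 / ε) :=
      rpow_subadd _ _ _ (by positivity) (by positivity) (by positivity)
        (by rw [div_le_one hε0]; linarith)
    have h4le : (4:ℝ) ^ (1 / ε) ≤ 4 := by
      nth_rewrite 2 [show (4:ℝ) = 4 ^ (1:ℝ) by rw [Real.rpow_one]]
      apply Real.rpow_le_rpow_of_exponent_le (by norm_num)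
      rw [div_le_one hε0]; linarith
    have hk4 : (4 * κ) ^ (1 / ε) ≤ 4 * κ ^ (1 / ε) := by
      rw [Real.mul_rpow (by norm_num) hκ]
      exact mul_le_mul_of_nonneg_right h4le (Real.rpow_nonneg hκ _)
    have hC4 : (4 * C) ^ (1 / ε) ≤ 4 * C ^ (1 / ε) := by
      rw [Real.mul_rpow (by norm_num) hC]
      exact mul_le_mul_of_nonneg_right h4le (Real.rpow_nonneg hC _)
    have hy := young_aux ε a κ hε1 hε2 ha hκ
    have hchain : Q ^ (1 / ε) ≤ 4 * κ ^ (1 / ε) + 4 * C ^ (1 / ε) := by linarith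
    have h8 : a * Q ^ (1 / ε) ≤ 4 * (a * κ ^ (1 / ε)) + 4 * (a * C ^ (1 / ε)) := by
      have := mul_le_mul_of_nonneg_left hchain ha
      nlinarith
    have hcC : 0 ≤ a * C ^ (1 / ε) := mul_nonneg ha (Real.rpow_nonneg hC _)
    have hca : 0 ≤ a ^ (ε / (ε - 1)) := Real.rpow_nonneg ha _
    nlinarith
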